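/- If δ > 0 is sufficiently small (indeed for every δ with 0 < δ ≤ e^{−3/2}), the function F₁ is convex on ℝ, even, nonnegative, and satisfies F₁′(s)·s ≥ 0 for all s ∈ ℝ. -/

import Mathlib

open Real Set Filter Topology

/-- For `δ > 0`, the function `F₁` from the decomposition of the logarithmic nonlinearity. -/
noncomputable def F1 (δ : ℝ) (s : ℝ) : ℝ :=
  if s = 0 then 0
  else if |s| < δ then -(1 / 2) * s ^ 2 * Real.log (s ^ 2)
  else -(1 / 2) * s ^ 2 * (Real.log (δ ^ 2) + 3) + 2 * δ * |s| - (1 / 2) * δ ^ 2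

noncomputable def fIn (s : ℝ) : ℝ := -(1 / 2) * s ^ 2 * Real.log (s ^ 2)

noncomputable def fOut (δ s : ℝ) : ℝ :=
  -(1 / 2) * s ^ 2 * (Real.log (δ ^ 2) + 3) + 2 * δ * |s| - (1 / 2) * δ ^ 2

noncomputable def G (δ s : ℝ) : ℝ :=
  if |s| < δ then -s * Real.log (s ^ 2) - s
  else -(Real.log (δ ^ 2) + 3) * s + 2 * δ * Real.sign s

lemma hasDerivAt_fIn {s : ℝ} (hs : s ≠ 0) :
    HasDerivAt fIn (-s * Real.log (s ^ 2) - s) s := by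
  have h1 : HasDerivAt (fun x : ℝ => x ^ 2) (2 * s) s := by
    simpa using hasDerivAt_pow 2 s
  have h2 : HasDerivAt (fun x : ℝ => Real.log (x ^ 2)) (2 * s / s ^ 2) s :=
    h1.log (pow_ne_zero 2 hs)
  have h3 := (h1.const_mul (-(1 / 2) : ℝ)).mul h2
  have e : -s * Real.log (s ^ 2) - s
      = -(1 / 2) * (2 * s) * Real.log (s ^ 2) + -(1 / 2) * s ^ 2 * (2 * s / s ^ 2) := by
    field_simp
    ring
  rw [e]; exact h3

lemma hasDerivAt_fIn_zero : HasDerivAt fIn 0 0 := by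
  rw [hasDerivAt_iff_tendsto_slope]
  have key : Tendsto (fun h : ℝ => -(h * Real.log h)) (𝓝[≠] 0) (𝓝 0) := by
    have := (Real.continuous_mul_log.neg.tendsto 0)
    simpa [Pi.neg_def] using this.mono_left nhdsWithin_le_nhds
  refine key.congr' ?_
  filter_upwards [self_mem_nhdsWithin] with h hh
  have hh' : (h : ℝ) ≠ 0 := hh
  rw [slope_def_field]
  simp only [fIn]
  rw [Real.log_pow]
  field_simp
  ring

lemma F1_eq_fIn {δ s : ℝ} (hs : |s| ≤ δ) : F1 δ s = fIn s := by
  rcases eq_or_ne s 0 with rfl | hs0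
  · simp [F1, fIn]
  rcases lt_or_eq_of_le hs with h | h
  · simp [F1, fIn, hs0, h]
  · have h2 : s ^ 2 = δ ^ 2 := by rw [← sq_abs, h]
    simp only [F1, fIn, if_neg hs0, h, h2, if_neg (lt_irrefl δ)]
    ring

lemma F1_eq_fOut {δ s : ℝ} (hδ : 0 < δ) (hs : δ ≤ |s|) : F1 δ s = fOut δ s := by
  have hs0 : s ≠ 0 := by
    intro h; rw [h] at hs; simp at hs; linarith
  simp [F1, fOut, hs0, not_lt.mpr hs]

lemma hasDerivAt_polyPos (δ : ℝ) (s : ℝ) :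
    HasDerivAt (fun x : ℝ => -(1 / 2) * x ^ 2 * (Real.log (δ ^ 2) + 3) + 2 * δ * x - (1 / 2) * δ ^ 2)
      (-(Real.log (δ ^ 2) + 3) * s + 2 * δ) s := by
  have h1 : HasDerivAt (fun x : ℝ => x ^ 2) (2 * s) s := by
    simpa using hasDerivAt_pow 2 s
  have h2 := (((h1.const_mul (-(1 / 2) : ℝ)).mul_const (Real.log (δ ^ 2) + 3)).add
    ((hasDerivAt_id s).const_mul (2 * δ))).sub_const ((1 / 2) * δ ^ 2)
  have e : -(Real.log (δ ^ 2) + 3) * s + 2 * δ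
      = -(1 / 2) * (2 * s) * (Real.log (δ ^ 2) + 3) + 2 * δ * 1 := by ring
  rw [e]; exact h2

lemma hasDerivAt_polyNeg (δ : ℝ) (s : ℝ) :
    HasDerivAt (fun x : ℝ => -(1 / 2) * x ^ 2 * (Real.log (δ ^ 2) + 3) + 2 * δ * -x - (1 / 2) * δ ^ 2)
      (-(Real.log (δ ^ 2) + 3) * s + 2 * δ * (-1)) s := by
  have h1 : HasDerivAt (fun x : ℝ => x ^ 2) (2 * s) s := by
    simpa using hasDerivAt_pow 2 s
  have h2 := (((h1.const_mul (-(1 / 2) : ℝ)).mul_const (Real.log (δ ^ 2) + 3)).add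
    (((hasDerivAt_id s).neg).const_mul (2 * δ))).sub_const ((1 / 2) * δ ^ 2)
  have e : -(Real.log (δ ^ 2) + 3) * s + 2 * δ * (-1)
      = -(1 / 2) * (2 * s) * (Real.log (δ ^ 2) + 3) + 2 * δ * (-1) := by ring
  rw [e]; exact h2

lemma F1_hasDerivAt (δ : ℝ) (hδ : 0 < δ) (s : ℝ) : HasDerivAt (F1 δ) (G δ s) s := by
  rcases lt_trichotomy |s| δ with h | h | h
  · -- inner region
    have hev : F1 δ =ᶠ[𝓝 s] fIn := by
      have hop : IsOpen {x : ℝ | |x| < δ} := isOpen_lt continuous_abs continuous_const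
      filter_upwards [hop.mem_nhds h] with x hx
      exact F1_eq_fIn (le_of_lt hx)
    have hG : G δ s = -s * Real.log (s ^ 2) - s := if_pos h
    rw [hG]
    rcases eq_or_ne s 0 with rfl | hs0
    · simpa using hasDerivAt_fIn_zero.congr_of_eventuallyEq hev
    · exact (hasDerivAt_fIn hs0).congr_of_eventuallyEq hev
  · -- boundary
    rcases (abs_eq hδ.le).mp h with h' | h'
    · -- s = δ
      rw [h']
      have hleft : HasDerivWithinAt (F1 δ) (-(Real.log (δ ^ 2) + 3) * δ + 2 * δ) (Iic δ) δ := by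
        have hbase := (hasDerivAt_fIn (ne_of_gt hδ)).hasDerivWithinAt (s := Iic δ)
        have e : -(Real.log (δ ^ 2) + 3) * δ + 2 * δ = -δ * Real.log (δ ^ 2) - δ := by ring
        rw [e]
        refine hbase.congr_of_eventuallyEq ?_ (F1_eq_fIn (by rw [abs_of_pos hδ]))
        filter_upwards [mem_nhdsWithin_of_mem_nhds (Ioi_mem_nhds (show -δ < δ by linarith)),
          self_mem_nhdsWithin] with x h1 h2
        exact F1_eq_fIn (abs_le.mpr ⟨le_of_lt h1, h2⟩)
      have hright : HasDerivWithinAt (F1 δ) (-(Real.log (δ ^ 2) + 3) * δ + 2 * δ) (Ici δ) δ := by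
        refine ((hasDerivAt_polyPos δ δ).hasDerivWithinAt (s := Ici δ)).congr ?_ ?_
        · intro x hx
          have hx' : δ ≤ x := hx
          rw [F1_eq_fOut hδ (le_trans hx' (le_abs_self x)), fOut,
            abs_of_pos (lt_of_lt_of_le hδ hx')]
        · rw [F1_eq_fOut hδ (by rw [abs_of_pos hδ]), fOut, abs_of_pos hδ]
      have := hleft.union hright
      rw [Iic_union_Ici, hasDerivWithinAt_univ] at this
      have hG : G δ δ = -(Real.log (δ ^ 2) + 3) * δ + 2 * δ := by
        rw [G, if_neg (by simp [abs_of_pos hδ]), Real.sign_of_pos hδ, mul_one]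
      rw [hG]; exact this
    · -- s = -δ
      rw [h']
      have hleft : HasDerivWithinAt (F1 δ) (-(Real.log (δ ^ 2) + 3) * (-δ) + 2 * δ * (-1))
          (Iic (-δ)) (-δ) := by
        refine ((hasDerivAt_polyNeg δ (-δ)).hasDerivWithinAt (s := Iic (-δ))).congr ?_ ?_
        · intro x hx
          have hx' : x ≤ -δ := hx
          have habs : |x| = -x := abs_of_neg (by linarith)
          rw [F1_eq_fOut hδ (by rw [habs]; linarith), fOut, habs]
        · have habs : |(-δ)| = -(-δ) := abs_of_neg (by linarith)
          rw [F1_eq_fOut hδ (by rw [habs]; linarith), fOut, habs]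
      have hright : HasDerivWithinAt (F1 δ) (-(Real.log (δ ^ 2) + 3) * (-δ) + 2 * δ * (-1))
          (Ici (-δ)) (-δ) := by
        have hbase := (hasDerivAt_fIn (show (-δ : ℝ) ≠ 0 by intro h; nlinarith)).hasDerivWithinAt
          (s := Ici (-δ))
        have e : -(Real.log (δ ^ 2) + 3) * (-δ) + 2 * δ * (-1)
            = -(-δ) * Real.log ((-δ) ^ 2) - (-δ) := by rw [neg_sq]; ring
        rw [e]
        refine hbase.congr_of_eventuallyEq ?_ (F1_eq_fIn (by rw [abs_of_neg (by linarith : (-δ:ℝ) < 0)]; linarith))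
        filter_upwards [mem_nhdsWithin_of_mem_nhds (Iio_mem_nhds (show -δ < δ by linarith)),
          self_mem_nhdsWithin] with x h1 h2
        have h2' : -δ ≤ x := h2
        exact F1_eq_fIn (abs_le.mpr ⟨h2', le_of_lt h1⟩)
      have := hleft.union hright
      rw [Iic_union_Ici, hasDerivWithinAt_univ] at this
      have hG : G δ (-δ) = -(Real.log (δ ^ 2) + 3) * (-δ) + 2 * δ * (-1) := by
        rw [G, if_neg (by rw [abs_neg, abs_of_pos hδ]; exact lt_irrefl δ),
          Real.sign_of_neg (by linarith : (-δ:ℝ) < 0)]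
      rw [hG]; exact this
  · -- outer region
    have hs0 : s ≠ 0 := by intro h0; rw [h0] at h; simp at h; linarith
    rcases hs0.lt_or_gt with hneg | hpos
    · -- s < 0
      have hsd : s < -δ := by
        have := abs_of_neg hneg; linarith [h, this]
      have hev : F1 δ =ᶠ[𝓝 s]
          (fun x : ℝ => -(1 / 2) * x ^ 2 * (Real.log (δ ^ 2) + 3) + 2 * δ * -x - (1 / 2) * δ ^ 2) := by
        filter_upwards [Iio_mem_nhds hsd] with x hx
        have hx' : x < -δ := hx
        have habs : |x| = -x := abs_of_neg (by linarith)
        rw [F1_eq_fOut hδ (by rw [habs]; linarith), fOut, habs]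
      have hG : G δ s = -(Real.log (δ ^ 2) + 3) * s + 2 * δ * (-1) := by
        rw [G, if_neg (not_lt.mpr h.le), Real.sign_of_neg hneg]
      rw [hG]
      exact (hasDerivAt_polyNeg δ s).congr_of_eventuallyEq hev
    · -- s > 0
      have hsd : δ < s := by
        have := abs_of_pos hpos; linarith [h, this]
      have hev : F1 δ =ᶠ[𝓝 s]
          (fun x : ℝ => -(1 / 2) * x ^ 2 * (Real.log (δ ^ 2) + 3) + 2 * δ * x - (1 / 2) * δ ^ 2) := by
        filter_upwards [Ioi_mem_nhds hsd] with x hx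
        have hx' : δ < x := hx
        rw [F1_eq_fOut hδ (le_trans hx'.le (le_abs_self x)), fOut, abs_of_pos (lt_trans hδ hx')]
      have hG : G δ s = -(Real.log (δ ^ 2) + 3) * s + 2 * δ := by
        rw [G, if_neg (not_lt.mpr h.le), Real.sign_of_pos hpos, mul_one]
      rw [hG]
      exact (hasDerivAt_polyPos δ s).congr_of_eventuallyEq hev

noncomputable def gIn (y : ℝ) : ℝ := -(y * Real.log (y ^ 2)) - y

lemma hasDerivAt_gIn {x : ℝ} (hx : x ≠ 0) : HasDerivAt gIn (-Real.log (x ^ 2) - 3) x := by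
  have h1 : HasDerivAt (fun y : ℝ => y ^ 2) (2 * x) x := by
    simpa using hasDerivAt_pow 2 x
  have h2 := ((hasDerivAt_id' x).mul (h1.log (pow_ne_zero 2 hx))).neg.sub (hasDerivAt_id' x)
  have e : -Real.log (x ^ 2) - 3 = -(1 * Real.log (x ^ 2) + x * (2 * x / x ^ 2)) - 1 := by
    field_simp; ring
  rw [e]; exact h2

lemma G_eq_gIn {δ x : ℝ} (hδ : 0 < δ) (hx1 : 0 < x) (hx2 : x ≤ δ) : G δ x = gIn x := by
  rcases lt_or_eq_of_le hx2 with h | h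
  · rw [G, if_pos (by rw [abs_of_pos hx1]; exact h), gIn]; ring
  · subst h
    rw [G, if_neg (by rw [abs_of_pos hx1]; exact lt_irrefl x), Real.sign_of_pos hx1, gIn]
    ring

lemma G_hasDerivAt {δ x : ℝ} (hδ : 0 < δ) (hx : 0 < x) :
    HasDerivAt (G δ)
      (if x < δ then -Real.log (x ^ 2) - 3 else -(Real.log (δ ^ 2) + 3)) x := by
  rcases lt_trichotomy x δ with h | h | h
  · rw [if_pos h]
    refine (hasDerivAt_gIn (ne_of_gt hx)).congr_of_eventuallyEq ?_
    filter_upwards [Ioo_mem_nhds hx h] with y hy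
    exact G_eq_gIn hδ hy.1 hy.2.le
  · subst h
    rw [if_neg (lt_irrefl x)]
    have hleft : HasDerivWithinAt (G x) (-(Real.log (x ^ 2) + 3)) (Iic x) x := by
      have hbase := (hasDerivAt_gIn (ne_of_gt hx)).hasDerivWithinAt (s := Iic x)
      have e : -(Real.log (x ^ 2) + 3) = -Real.log (x ^ 2) - 3 := by ring
      rw [e]
      refine hbase.congr_of_eventuallyEq ?_ (G_eq_gIn hδ hx le_rfl)
      filter_upwards [mem_nhdsWithin_of_mem_nhds (Ioi_mem_nhds hx), self_mem_nhdsWithin]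
        with y h1 h2
      exact G_eq_gIn hδ h1 h2
    have hright : HasDerivWithinAt (G x) (-(Real.log (x ^ 2) + 3)) (Ici x) x := by
      have hbase : HasDerivAt (fun y : ℝ => -(Real.log (x ^ 2) + 3) * y + 2 * x)
          (-(Real.log (x ^ 2) + 3)) x := by
        have := ((hasDerivAt_id' x).const_mul (-(Real.log (x ^ 2) + 3))).add_const (2 * x)
        simpa using this
      refine (hbase.hasDerivWithinAt (s := Ici x)).congr ?_ ?_
      · intro y hy
        have hy' : x ≤ y := hy
        rw [G, if_neg (by rw [abs_of_pos (lt_of_lt_of_le hx hy')]; exact not_lt.mpr hy'),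
          Real.sign_of_pos (lt_of_lt_of_le hx hy'), mul_one]
      · rw [G, if_neg (by rw [abs_of_pos hx]; exact lt_irrefl x), Real.sign_of_pos hx, mul_one]
    have := hleft.union hright
    rwa [Iic_union_Ici, hasDerivWithinAt_univ] at this
  · rw [if_neg (not_lt.mpr h.le)]
    have hbase : HasDerivAt (fun y : ℝ => -(Real.log (δ ^ 2) + 3) * y + 2 * δ)
        (-(Real.log (δ ^ 2) + 3)) x := by
      have := ((hasDerivAt_id' x).const_mul (-(Real.log (δ ^ 2) + 3))).add_const (2 * δ)
      simpa using this
    refine hbase.congr_of_eventuallyEq ?_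
    filter_upwards [Ioi_mem_nhds h] with y hy
    have hy' : δ < y := hy
    rw [G, if_neg (by rw [abs_of_pos (lt_trans hδ hy')]; exact not_lt.mpr hy'.le),
      Real.sign_of_pos (lt_trans hδ hy'), mul_one]

lemma logsq_le {δ : ℝ} (hδ : 0 < δ) (hδ' : δ ≤ Real.exp (-(3 / 2))) :
    Real.log (δ ^ 2) + 3 ≤ 0 := by
  have h1 : Real.log δ ≤ -(3 / 2) := (Real.log_le_iff_le_exp hδ).mpr hδ'
  have h2 : Real.log (δ ^ 2) = 2 * Real.log δ := by
    rw [Real.log_pow]; norm_num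
  linarith

lemma G_zero {δ : ℝ} (hδ : 0 < δ) : G δ 0 = 0 := by
  simp [G, abs_zero, hδ]

lemma G_neg (δ s : ℝ) : G δ (-s) = -G δ s := by
  rw [G, G, abs_neg]
  split
  · rw [neg_sq]; ring
  · rw [Real.sign_neg]; ring

lemma G_monotoneOn {δ : ℝ} (hδ : 0 < δ) (hδ' : δ ≤ Real.exp (-(3 / 2))) :
    MonotoneOn (G δ) (Ici 0) := by
  have hL := logsq_le hδ hδ'
  refine monotoneOn_of_deriv_nonneg (convex_Ici 0) ?_ ?_ ?_
  · -- continuity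
    intro x hx
    rcases eq_or_lt_of_le (Set.mem_Ici.mp hx : (0:ℝ) ≤ x) with h | h
    · have hcont : Continuous (fun y : ℝ => -(2 * (y * Real.log y)) - y) :=
        ((continuous_const.mul Real.continuous_mul_log).neg).sub continuous_id
      have : ContinuousAt (G δ) 0 := by
        refine hcont.continuousAt.congr ?_
        have hop : IsOpen {y : ℝ | |y| < δ} := isOpen_lt continuous_abs continuous_const
        filter_upwards [hop.mem_nhds (by simpa using hδ)] with y hy
        rw [G, if_pos hy, Real.log_pow]
        push_cast; ring
      rw [← h]
      exact this.continuousWithinAt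
    · exact ((G_hasDerivAt hδ h).differentiableAt.continuousAt).continuousWithinAt
  · -- differentiability on interior
    rw [interior_Ici]
    intro x hx
    exact ((G_hasDerivAt hδ hx).differentiableAt).differentiableWithinAt
  · -- deriv nonneg
    rw [interior_Ici]
    intro x hx
    have hx' : 0 < x := hx
    rw [(G_hasDerivAt hδ hx').deriv]
    split_ifs with h
    · have h1 : Real.log (x ^ 2) ≤ Real.log (δ ^ 2) :=
        Real.log_le_log (by positivity) (by nlinarith)
      linarith
    · linarith

lemma G_mono {δ : ℝ} (hδ : 0 < δ) (hδ' : δ ≤ Real.exp (-(3 / 2))) : Monotone (G δ) := by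
  have hm := G_monotoneOn hδ hδ'
  intro x y hxy
  rcases le_total 0 x with hx | hx
  · exact hm hx (le_trans hx hxy) hxy
  rcases le_total 0 y with hy | hy
  · have h1 : G δ (-x) ≥ G δ 0 := hm Set.self_mem_Ici (by simpa using neg_nonneg.mpr hx) (neg_nonneg.mpr hx)
    have h2 : G δ y ≥ G δ 0 := hm Set.self_mem_Ici hy hy
    have h3 : G δ x = -G δ (-x) := by rw [G_neg]; ring
    rw [G_zero hδ] at h1 h2
    linarith
  · have h1 : G δ (-y) ≤ G δ (-x) := hm (by simpa using neg_nonneg.mpr hy)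
      (by simpa using neg_nonneg.mpr hx) (by linarith)
    have h3 : G δ x = -G δ (-x) := by rw [G_neg]; ring
    have h4 : G δ y = -G δ (-y) := by rw [G_neg]; ring
    linarith

/-- If `δ > 0` is sufficiently small (indeed for every `δ` with
`0 < δ ≤ e^{−3/2}`), the function `F₁` is convex on `ℝ`, even, nonnegative, and
satisfies `F₁′(s)·s ≥ 0` for all `s ∈ ℝ`. -/
theorem F1_convex_even_nonneg (δ : ℝ) (hδ : 0 < δ) (hδ' : δ ≤ Real.exp (-(3 / 2))) :
    ConvexOn ℝ Set.univ (F1 δ) ∧ Function.Even (F1 δ) ∧ (∀ s : ℝ, 0 ≤ F1 δ s) ∧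
      ∀ s : ℝ, deriv (F1 δ) s * s ≥ 0 := by
  have hL := logsq_le hδ hδ'
  have hderiv : ∀ s, HasDerivAt (F1 δ) (G δ s) s := F1_hasDerivAt δ hδ
  have hderiv' : deriv (F1 δ) = G δ := funext fun s => (hderiv s).deriv
  have hδ1 : δ ≤ 1 := le_trans hδ' (by rw [Real.exp_le_one_iff]; norm_num)
  refine ⟨?_, ?_, ?_, ?_⟩
  · apply Monotone.convexOn_univ_of_deriv (fun s => (hderiv s).differentiableAt)
    rw [hderiv']; exact G_mono hδ hδ'
  · intro s
    rcases eq_or_ne s 0 with rfl | h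
    · simp
    · simp [F1, neg_eq_zero, h, abs_neg, neg_sq]
  · intro s
    rcases le_or_gt |s| δ with h | h
    · rw [F1_eq_fIn h, fIn]
      have hs1 : s ^ 2 ≤ 1 := by
        have h' : |s| ≤ 1 := le_trans h hδ1
        nlinarith [abs_nonneg s, sq_abs s]
      have h1 : Real.log (s ^ 2) ≤ 0 := Real.log_nonpos (by positivity) hs1
      nlinarith [sq_nonneg s]
    · rw [F1_eq_fOut hδ h.le, fOut]
      have h1 : s ^ 2 * (Real.log (δ ^ 2) + 3) ≤ 0 :=
        mul_nonpos_of_nonneg_of_nonpos (sq_nonneg s) hL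
      have h2 : 2 * δ * δ ≤ 2 * δ * |s| :=
        mul_le_mul_of_nonneg_left h.le (by linarith)
      nlinarith
  · intro s
    rw [hderiv', G]
    split_ifs with h
    · rcases eq_or_ne s 0 with rfl | hs0
      · simp
      · have hsq : 0 < s ^ 2 := by positivity
        have h1 : Real.log (s ^ 2) ≤ Real.log (δ ^ 2) :=
          Real.log_le_log hsq (by nlinarith [sq_abs s, abs_nonneg s])
        have h2 : Real.log (s ^ 2) ≤ -1 := by linarith
        have h3 : (0:ℝ) ≤ s ^ 2 * (-Real.log (s ^ 2) - 1) :=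
          mul_nonneg (sq_nonneg s) (by linarith)
        nlinarith [sq_nonneg s]
    · push_neg at h
      have hs0 : s ≠ 0 := by intro h0; rw [h0] at h; simp at h; linarith
      have h1 : s ^ 2 * (Real.log (δ ^ 2) + 3) ≤ 0 :=
        mul_nonpos_of_nonneg_of_nonpos (sq_nonneg s) hL
      rcases hs0.lt_or_gt with hneg | hpos
      · rw [Real.sign_of_neg hneg]
        have h2 : δ ≤ -s := by rw [← abs_of_neg hneg]; exact h
        nlinarith
      · rw [Real.sign_of_pos hpos]
        have h2 : δ ≤ s := by rw [← abs_of_pos hpos]; exact h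
        nlinarith
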